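/- A generalized basilica group G = ⟨Y⟩ ≤ Aut(X*) with distinguished generating set Y is self-replicating if and only if G is generated by the directed elements of Y and G acts transitively on X. -/

import Mathlib

universe u v

/-- The automorphism group of the rooted tree `X*`: permutations of the free monoid
`List X` that preserve the prefix relation. -/
def treeAut (X : Type u) : Subgroup (Equiv.Perm (List X)) where
  carrier := {g | ∀ a b : List X, a <+: b ↔ g a <+: g b}
  one_mem' := by intro a b; simp
  mul_mem' := by
    intro g h hg hh a b
    simpa [Equiv.Perm.mul_apply] using (hh a b).trans (hg (h a) (h b))
  inv_mem' := by
    intro g hg a b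
    simpa using (hg (g⁻¹ a) (g⁻¹ b)).symm

/-- The section of `g` at the word `w`: the unique automorphism `s` satisfying
`g (w ++ v) = g w ++ s v` for all `v` (with junk value `1` if no such permutation exists). -/
noncomputable def secAt {X : Type u} (g : Equiv.Perm (List X)) (w : List X) :
    Equiv.Perm (List X) :=
  haveI := Classical.propDecidable
  if h : ∃ s : Equiv.Perm (List X), ∀ v : List X, g (w ++ v) = g w ++ s v then h.choose
  else 1

/-- The permutation of `X` induced by `g` on the first level of the tree. -/
noncomputable def perm1 {X : Type u} (g : Equiv.Perm (List X)) : Equiv.Perm X :=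
  haveI := Classical.propDecidable
  if h : ∃ σ : Equiv.Perm X, ∀ x : X, g [x] = [σ x] then h.choose else 1

/-- A permutation of `X`, viewed as a finitary automorphism of `X*` of depth (at most) one. -/
def embed1 {X : Type u} (σ : Equiv.Perm X) : Equiv.Perm (List X) where
  toFun w := match w with
    | [] => []
    | x :: vtl => σ x :: vtl
  invFun w := match w with
    | [] => []
    | x :: vtl => σ⁻¹ x :: vtl
  left_inv := by rintro (_ | ⟨x, vtl⟩) <;> simp
  right_inv := by rintro (_ | ⟨x, vtl⟩) <;> simp

/-- `G` is self-similar: all sections of elements of `G` belong to `G`. -/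
def SelfSimilarSub {X : Type u} (G : Subgroup (Equiv.Perm (List X))) : Prop :=
  ∀ g ∈ G, ∀ w : List X, secAt g w ∈ G

/-- `sec_G(v)`: the image of the pointwise stabilizer of `v` in `G` under the
section homomorphism at `v`. -/
def secImage {X : Type u} (G : Subgroup (Equiv.Perm (List X))) (v : List X) :
    Set (Equiv.Perm (List X)) :=
  {h | ∃ g ∈ G, g v = v ∧ secAt g v = h}

/-- `G` is self-replicating: self-similar, transitive on `X`, and `sec_G(x) = G`
for every `x ∈ X`. -/
def SelfReplicating {X : Type u} (G : Subgroup (Equiv.Perm (List X))) : Prop :=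
  SelfSimilarSub G ∧ (∀ x y : X, ∃ g ∈ G, g [x] = [y]) ∧
    ∀ x : X, secImage G [x] = (G : Set (Equiv.Perm (List X)))

/-- `G` is weakly self-replicating: `sec_G(v) = G` for every word `v`. -/
def WeaklySelfReplicating {X : Type u} (G : Subgroup (Equiv.Perm (List X))) : Prop :=
  ∀ v : List X, secImage G v = (G : Set (Equiv.Perm (List X)))

/-- `g` is finitary: all sections at some level are trivial. -/
def IsFinitary {X : Type u} (g : Equiv.Perm (List X)) : Prop :=
  ∃ k : ℕ, ∀ v : List X, v.length = k → secAt g v = 1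

/-- `g` is directed. -/
def IsDirectedAut {X : Type u} (g : Equiv.Perm (List X)) : Prop :=
  ∃ k : ℕ, 1 ≤ k ∧ ∃ w : List X, w.length = k ∧ secAt g w = g ∧
    ∀ v : List X, v.length = k → v ≠ w → IsFinitary (secAt g v)

/-- `g` has bounded activity. -/
def IsBoundedAut {X : Type u} (g : Equiv.Perm (List X)) : Prop :=
  ∃ N : ℕ, ∀ n : ℕ, 1 ≤ n →
    Set.ncard {v : List X | v.length = n ∧ secAt g v ≠ 1} ≤ N

/-- `g` is finite state. -/
def IsFiniteState {X : Type u} (g : Equiv.Perm (List X)) : Prop :=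
  (Set.range fun v : List X => secAt g v).Finite

/-- A bounded automata group: a finitely generated self-similar group of tree
automorphisms, all of whose elements are bounded and finite state. -/
def BoundedAutomataGroup {X : Type u} (G : Subgroup (Equiv.Perm (List X))) : Prop :=
  G ≤ treeAut X ∧ G.FG ∧ SelfSimilarSub G ∧
    ∀ g ∈ G, IsBoundedAut g ∧ IsFiniteState g

/-- An odometer: `⟨d⟩` is transitive on `X` and `d` has exactly one nontrivial
first-level section, which equals `d`. -/
def IsOdometer {X : Type u} (d : Equiv.Perm (List X)) : Prop :=
  (∀ x y : X, ∃ n : ℤ, (d ^ n) [x] = [y]) ∧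
  (∀ x : X, secAt d [x] = 1 ∨ secAt d [x] = d) ∧
  ∃! x : X, secAt d [x] = d

/-- A generalized basilica group, with distinguished generating set `Y`. -/
def GenBasilica {X : Type u} (G : Subgroup (Equiv.Perm (List X)))
    (Y : Set (Equiv.Perm (List X))) : Prop :=
  G ≤ treeAut X ∧ Y.Finite ∧ Subgroup.closure Y = G ∧
    ∀ g ∈ Y, (∀ x : X, secAt g [x] = 1) ∨
      ((∀ x : X, secAt g [x] = 1 ∨ secAt g [x] = g) ∧ ∃! x : X, secAt g [x] = g)

/-- The generating set `Y` is balanced: for each directed `g ∈ Y` with active vertex `x`,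
the least `n ≥ 1` such that `g ^ n` fixes `x` also satisfies that `g ^ n` fixes `X`
pointwise. -/
def BalancedSet {X : Type u} (Y : Set (Equiv.Perm (List X))) : Prop :=
  ∀ g ∈ Y, IsDirectedAut g → ∀ x : X, secAt g [x] = g →
    ∀ n : ℕ, 1 ≤ n → (g ^ n) [x] = [x] →
      (∀ m : ℕ, 1 ≤ m → m < n → (g ^ m) [x] ≠ [x]) →
      ∀ y : X, (g ^ n) [y] = [y]

/-- A bounded automata group in reduced form, with distinguished generating set `Y`. -/
def ReducedForm {X : Type u} (G : Subgroup (Equiv.Perm (List X)))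
    (Y : Set (Equiv.Perm (List X))) : Prop :=
  Y.Finite ∧ Subgroup.closure Y = G ∧
    ∀ g ∈ Y, (∀ x : X, secAt g [x] = 1) ∨
      ((∀ x : X, secAt g [x] = g ∨ ∃ h ∈ G, secAt g [x] = embed1 (perm1 h)) ∧
        ∃! x : X, secAt g [x] = g)

/-- A group of abelian wreath type, with distinguished (self-similar) generating set `Y`. -/
def AbelianWreathType {X : Type u} (G : Subgroup (Equiv.Perm (List X)))
    (Y : Set (Equiv.Perm (List X))) : Prop :=
  G ≤ treeAut X ∧
  (∀ g ∈ G, ∀ h ∈ G, perm1 g * perm1 h = perm1 h * perm1 g) ∧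
  Y.Finite ∧ Subgroup.closure Y = G ∧
  (∀ g ∈ Y, ∀ x : X, secAt g [x] ∈ Y) ∧
  ∀ g ∈ Y, (∀ x : X, secAt g [x] = 1) ∨
    ((∀ x : X, secAt g [x] = g ∨ ∃ h ∈ G, secAt g [x] = embed1 (perm1 h)) ∧
      ∃! x : X, secAt g [x] = g)

/-- The setoid on `X` whose classes are the orbits of `⟨σ⟩`, i.e. the cycles (including
length-one cycles) in the complete cycle decomposition of `σ`. -/
def cycleSetoid {X : Type u} (σ : Equiv.Perm X) : Setoid X where
  r x y := ∃ n : ℤ, (σ ^ n) x = y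
  iseqv := by
    constructor
    · exact fun x => ⟨0, by simp⟩
    · rintro x y ⟨n, rfl⟩
      exact ⟨-n, by rw [← Equiv.Perm.mul_apply, ← zpow_add, neg_add_cancel, zpow_zero,
        Equiv.Perm.one_apply]⟩
    · rintro x y z ⟨n, rfl⟩ ⟨m, rfl⟩
      exact ⟨m + n, by rw [← Equiv.Perm.mul_apply, ← zpow_add]⟩

/-- The vertex set of the cycle graph of a sequence of permutations: elements of `X`
together with the cycles of the permutations. -/
def CycleVertex {X : Type u} {ι : Type v} (σ : ι → Equiv.Perm X) : Type (max u v) :=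
  X ⊕ Σ i : ι, Quotient (cycleSetoid (σ i))

/-- The cycle graph of a sequence of permutations of `X`: a bipartite graph on
`X ⊔ {cycles}`, with an edge between `x ∈ X` and a cycle whenever `x` appears in it. -/
def cycleGraph {X : Type u} {ι : Type v} (σ : ι → Equiv.Perm X) :
    SimpleGraph (CycleVertex σ) where
  Adj a b := ∃ (x : X) (p : Σ i : ι, Quotient (cycleSetoid (σ i))),
      Quotient.mk (cycleSetoid (σ p.1)) x = p.2 ∧
      ((a = Sum.inl x ∧ b = Sum.inr p) ∨ (a = Sum.inr p ∧ b = Sum.inl x))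
  symm := ⟨by
    rintro a b ⟨x, p, hx, h | h⟩ <;> exact ⟨x, p, hx, by tauto⟩⟩
  loopless := ⟨by
    rintro a ⟨x, p, hx, ⟨h1, h2⟩ | ⟨h1, h2⟩⟩ <;> simp_all⟩

/-- A sequence of permutations of `X` is tree-like if its cycle graph is a tree. -/
def TreeLike {X : Type u} {ι : Type v} (σ : ι → Equiv.Perm X) : Prop :=
  (cycleGraph σ).IsTree

/-- A kneading automata group, with distinguished generating set `Y`. -/
def Kneading {X : Type u} (G : Subgroup (Equiv.Perm (List X)))
    (Y : Set (Equiv.Perm (List X))) : Prop :=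
  G ≤ treeAut X ∧ Y.Finite ∧ Subgroup.closure Y = G ∧
  (∀ g ∈ Y, ∀ x : X, secAt g [x] ∈ Y) ∧
  (∀ h ∈ Y, h ≠ 1 → ∃! p : Equiv.Perm (List X) × X, p.1 ∈ Y ∧ secAt p.1 [p.2] = h) ∧
  (∀ h ∈ Y, ∀ x y : X, (∃ n : ℤ, ((perm1 h) ^ n) x = y) →
      secAt h [x] ≠ 1 → secAt h [y] ≠ 1 → x = y) ∧
  TreeLike (fun h : {h : Equiv.Perm (List X) // h ∈ Y ∧ h ≠ 1} => perm1 h.1)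

/-- A group is virtually abelian if it has an abelian subgroup of finite index. -/
def VirtuallyAbelian (G : Type u) [Group G] : Prop :=
  ∃ H : Subgroup G, H.FiniteIndex ∧ ∀ a b : ↥H, a * b = b * a

/-- A group is locally finite if all of its finitely generated subgroups are finite. -/
def LocallyFiniteGroup (G : Type u) [Group G] : Prop :=
  ∀ H : Subgroup G, H.FG → Finite ↥H

/-- The class of elementary amenable groups: the smallest class of groups containing all
finite groups and all abelian groups and closed under subgroups (equivalently, injective
homomorphisms), quotients (equivalently, surjective homomorphisms), group extensions and
directed unions. -/
inductive ElementaryAmenable : ∀ (G : Type u) [inst : Group G], Prop where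
  | of_finite (G : Type u) [Group G] (h : Finite G) : ElementaryAmenable G
  | of_comm (G : Type u) [Group G] (h : ∀ a b : G, a * b = b * a) : ElementaryAmenable G
  | of_injective (G H : Type u) [Group G] [Group H] (f : G →* H)
      (hf : Function.Injective f) (hH : ElementaryAmenable H) : ElementaryAmenable G
  | of_surjective (G H : Type u) [Group G] [Group H] (f : G →* H)
      (hf : Function.Surjective f) (hG : ElementaryAmenable G) : ElementaryAmenable H
  | of_extension (G : Type u) [Group G] (N : Subgroup G) [N.Normal]
      (hN : ElementaryAmenable ↥N) (hQ : ElementaryAmenable (G ⧸ N)) :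
      ElementaryAmenable G
  | of_directedUnion (G : Type u) [Group G] (ι : Type u) (H : ι → Subgroup G)
      (hdir : Directed (· ≤ ·) H) (hsup : (⨆ i, H i) = ⊤)
      (h : ∀ i, ElementaryAmenable ↥(H i)) : ElementaryAmenable G

/-- The ordinal-indexed hierarchy of elementary amenable groups: `EG₀` consists of the
groups that are finite or abelian (closed under isomorphism); `EG_{α+1}` consists of the
`EG_α`-by-`EG₀` groups together with the directed unions of `EG_α` groups; and
`EG_λ = ⋃_{β<λ} EG_β` for `λ` a limit. -/
inductive InEG : Ordinal.{u} → ∀ (G : Type u) [inst : Group G], Prop where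
  | base (G : Type u) [Group G] (h : Finite G ∨ ∀ a b : G, a * b = b * a) : InEG 0 G
  | iso (α : Ordinal.{u}) (G H : Type u) [Group G] [Group H] (e : G ≃* H)
      (h : InEG α G) : InEG α H
  | succ_ext (α : Ordinal.{u}) (G : Type u) [Group G] (N : Subgroup G) [N.Normal]
      (hN : InEG α ↥N)
      (hQ : Finite (G ⧸ N) ∨ ∀ a b : G ⧸ N, a * b = b * a) : InEG (α + 1) G
  | succ_lim (α : Ordinal.{u}) (G : Type u) [Group G] (ι : Type u) (H : ι → Subgroup G)
      (hdir : Directed (· ≤ ·) H) (hsup : (⨆ i, H i) = ⊤)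
      (h : ∀ i, InEG α ↥(H i)) : InEG (α + 1) G
  | limit (α β : Ordinal.{u}) (G : Type u) [Group G] (hα : Order.IsSuccLimit α) (hβ : β < α)
      (h : InEG β G) : InEG α G

/-- The construction rank of an elementary amenable group: the least ordinal `α` with
`G ∈ EG_α`. -/
noncomputable def egRank (G : Type u) [Group G] : Ordinal.{u} :=
  sInf {α : Ordinal.{u} | InEG α G}

/-- `M` is a normal subgroup of `H` (both viewed inside a common ambient group). -/
def NormalIn {G : Type u} [Group G] (M H : Subgroup G) : Prop :=
  M ≤ H ∧ ∀ h ∈ H, ∀ m ∈ M, h * m * h⁻¹ ∈ M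

/-- The verbal subgroup of the subgroup `H` given by the word `γ`, viewed inside the
ambient group. -/
def verbalIn {G : Type u} [Group G] {n : ℕ} (γ : FreeGroup (Fin n)) (H : Subgroup G) :
    Subgroup G :=
  Subgroup.closure {g | ∃ f : Fin n → G, (∀ i, f i ∈ H) ∧ FreeGroup.lift f γ = g}
theorem Equiv.Perm.apply_inv_self {α : Type*} (f : Equiv.Perm α) (x : α) : f (f⁻¹ x) = x :=
  f.apply_symm_apply x

theorem Equiv.Perm.inv_apply_self {α : Type*} (f : Equiv.Perm α) (x : α) : f⁻¹ (f x) = x :=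
  f.symm_apply_apply x

namespace GBaux

variable {X : Type u}

theorem mem_treeAut_iff {g : Equiv.Perm (List X)} :
    g ∈ treeAut X ↔ ∀ a b : List X, a <+: b ↔ g a <+: g b := Iff.rfl

theorem treeAut_nil {g : Equiv.Perm (List X)} (hg : g ∈ treeAut X) : g [] = [] := by
  have h := (mem_treeAut_iff.mp hg [] (g⁻¹ [])).mp List.nil_prefix
  rw [Equiv.Perm.apply_inv_self] at h
  exact List.prefix_nil.mp h

theorem treeAut_length_le {g : Equiv.Perm (List X)} (hg : g ∈ treeAut X) (a : List X) :
    a.length ≤ (g a).length := by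
  induction a using List.reverseRecOn with
  | nil => simp
  | append_singleton b x ih =>
    have hpre : g b <+: g (b ++ [x]) :=
      (mem_treeAut_iff.mp hg b (b ++ [x])).mp (List.prefix_append b [x])
    have hne : g b ≠ g (b ++ [x]) := by
      intro h
      have := g.injective h
      simp at this
    have hlt : (g b).length < (g (b ++ [x])).length := by
      rcases lt_or_eq_of_le hpre.length_le with h | h
      · exact h
      · exact absurd (hpre.eq_of_length h) hne
    simp only [List.length_append, List.length_singleton]
    omega

theorem treeAut_length {g : Equiv.Perm (List X)} (hg : g ∈ treeAut X) (a : List X) :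
    (g a).length = a.length := by
  refine le_antisymm ?_ (treeAut_length_le hg a)
  have := treeAut_length_le ((treeAut X).inv_mem hg) (g a)
  rwa [Equiv.Perm.inv_apply_self] at this

theorem treeAut_take {g : Equiv.Perm (List X)} (hg : g ∈ treeAut X) (w v : List X) :
    g (w ++ v) = g w ++ (g (w ++ v)).drop w.length := by
  have hp : g w <+: g (w ++ v) := (mem_treeAut_iff.mp hg w (w ++ v)).mp (List.prefix_append w v)
  have ht := List.prefix_iff_eq_take.mp hp
  conv_lhs => rw [← List.take_append_drop (g w).length (g (w ++ v))]
  rw [← ht, treeAut_length hg w]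

theorem exists_section {g : Equiv.Perm (List X)} (hg : g ∈ treeAut X) (w : List X) :
    ∃ s : Equiv.Perm (List X), ∀ v, g (w ++ v) = g w ++ s v := by
  have hg' : g⁻¹ ∈ treeAut X := (treeAut X).inv_mem hg
  have key : ∀ v, g (w ++ v) = g w ++ (g (w ++ v)).drop w.length := treeAut_take hg w
  have key' : ∀ v, g⁻¹ (g w ++ v) = w ++ (g⁻¹ (g w ++ v)).drop w.length := by
    intro v
    have h := treeAut_take hg' (g w) v
    rwa [Equiv.Perm.inv_apply_self, treeAut_length hg w] at h
  refine ⟨⟨fun v => (g (w ++ v)).drop w.length, fun v => (g⁻¹ (g w ++ v)).drop w.length,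
    ?_, ?_⟩, fun v => key v⟩
  · intro v
    show (g⁻¹ (g w ++ (g (w ++ v)).drop w.length)).drop w.length = v
    rw [← key v, Equiv.Perm.inv_apply_self]
    exact List.drop_left (l₁ := w) (l₂ := v)
  · intro v
    show (g (w ++ (g⁻¹ (g w ++ v)).drop w.length)).drop w.length = v
    rw [← key' v, Equiv.Perm.apply_inv_self, ← treeAut_length hg w]
    exact List.drop_left (l₁ := g w) (l₂ := v)

theorem secAt_spec {g : Equiv.Perm (List X)} (hg : g ∈ treeAut X) (w v : List X) :
    g (w ++ v) = g w ++ secAt g w v := by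
  have h := exists_section hg w
  rw [secAt, dif_pos h]
  exact h.choose_spec v

theorem secAt_unique {g : Equiv.Perm (List X)} {w : List X} {s : Equiv.Perm (List X)}
    (hs : ∀ v, g (w ++ v) = g w ++ s v) : secAt g w = s := by
  have h : ∃ s' : Equiv.Perm (List X), ∀ v, g (w ++ v) = g w ++ s' v := ⟨s, hs⟩
  rw [secAt, dif_pos h]
  refine Equiv.ext fun v => ?_
  have h1 := h.choose_spec v
  rw [hs v] at h1
  exact (List.append_cancel_left h1).symm

theorem secAt_one (w : List X) : secAt (1 : Equiv.Perm (List X)) w = 1 :=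
  secAt_unique fun v => by simp

theorem secAt_mul {g h : Equiv.Perm (List X)} (hg : g ∈ treeAut X) (hh : h ∈ treeAut X)
    (w : List X) : secAt (g * h) w = secAt g (h w) * secAt h w :=
  secAt_unique fun v => by
    simp only [Equiv.Perm.mul_apply, secAt_spec hh w, secAt_spec hg (h w)]

theorem secAt_inv {g : Equiv.Perm (List X)} (hg : g ∈ treeAut X) (w : List X) :
    secAt g⁻¹ w = (secAt g (g⁻¹ w))⁻¹ :=
  secAt_unique fun v => by
    have h := secAt_spec hg (g⁻¹ w) ((secAt g (g⁻¹ w))⁻¹ v)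
    rw [Equiv.Perm.apply_inv_self, Equiv.Perm.apply_inv_self] at h
    rw [← h, Equiv.Perm.inv_apply_self]

theorem secAt_mem_treeAut {g : Equiv.Perm (List X)} (hg : g ∈ treeAut X) (w : List X) :
    secAt g w ∈ treeAut X := by
  refine mem_treeAut_iff.mpr fun a b => ?_
  calc a <+: b ↔ w ++ a <+: w ++ b := (List.prefix_append_right_inj w).symm
    _ ↔ g (w ++ a) <+: g (w ++ b) := mem_treeAut_iff.mp hg _ _
    _ ↔ g w ++ secAt g w a <+: g w ++ secAt g w b := by rw [secAt_spec hg, secAt_spec hg]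
    _ ↔ secAt g w a <+: secAt g w b := List.prefix_append_right_inj (g w)

theorem secAt_append {g : Equiv.Perm (List X)} (hg : g ∈ treeAut X) (w w' : List X) :
    secAt g (w ++ w') = secAt (secAt g w) w' :=
  secAt_unique fun v => by
    rw [List.append_assoc, secAt_spec hg w (w' ++ v),
      secAt_spec (secAt_mem_treeAut hg w) w' v, secAt_spec hg w w', List.append_assoc]

theorem secAt_cons {g : Equiv.Perm (List X)} (hg : g ∈ treeAut X) (x : X) (w : List X) :
    secAt g (x :: w) = secAt (secAt g [x]) w := by
  have h := secAt_append hg [x] w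
  rwa [List.singleton_append] at h

theorem secAt_nil {g : Equiv.Perm (List X)} (hg : g ∈ treeAut X) : secAt g [] = g :=
  secAt_unique fun v => by rw [List.nil_append, treeAut_nil hg, List.nil_append]

theorem treeAut_singleton {g : Equiv.Perm (List X)} (hg : g ∈ treeAut X) (x : X) :
    ∃ y, g [x] = [y] := by
  have h := treeAut_length hg [x]
  exact List.length_eq_one_iff.mp (by simpa using h)

theorem sec_gen {G : Subgroup (Equiv.Perm (List X))} {Y : Set (Equiv.Perm (List X))}
    (hGB : GenBasilica G Y) :
    ∀ (w : List X) (g : Equiv.Perm (List X)), g ∈ Y → secAt g w = 1 ∨ secAt g w ∈ Y := by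
  have hYG : ∀ g ∈ Y, g ∈ G := fun g hg => hGB.2.2.1 ▸ Subgroup.subset_closure hg
  intro w
  induction w with
  | nil =>
    intro g hgY
    rw [secAt_nil (hGB.1 (hYG g hgY))]
    exact Or.inr hgY
  | cons x w ih =>
    intro g hgY
    have hg : g ∈ treeAut X := hGB.1 (hYG g hgY)
    rw [secAt_cons hg]
    have hx : secAt g [x] = 1 ∨ secAt g [x] = g := by
      rcases hGB.2.2.2 g hgY with h | h
      · exact Or.inl (h x)
      · exact h.1 x
    rcases hx with h | h
    · rw [h, secAt_one]; exact Or.inl rfl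
    · rw [h]; exact ih g hgY

theorem selfSimilar_of_genBasilica {G : Subgroup (Equiv.Perm (List X))}
    {Y : Set (Equiv.Perm (List X))} (hGB : GenBasilica G Y) : SelfSimilarSub G := by
  intro g hgG
  rw [← hGB.2.2.1] at hgG
  refine Subgroup.closure_induction (p := fun g _ => ∀ w, secAt g w ∈ G) ?_ ?_ ?_ ?_ hgG
  · intro g hgY w
    rcases sec_gen hGB w g hgY with h | h
    · rw [h]; exact one_mem G
    · exact hGB.2.2.1 ▸ Subgroup.subset_closure h
  · intro w; rw [secAt_one]; exact one_mem G
  · intro a b ha hb pa pb w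
    have haT : a ∈ treeAut X := hGB.1 (hGB.2.2.1 ▸ ha)
    have hbT : b ∈ treeAut X := hGB.1 (hGB.2.2.1 ▸ hb)
    rw [secAt_mul haT hbT]
    exact mul_mem (pa _) (pb _)
  · intro a ha pa w
    have haT : a ∈ treeAut X := hGB.1 (hGB.2.2.1 ▸ ha)
    rw [secAt_inv haT]
    exact inv_mem (pa _)

theorem exists_pow_fix [Finite X] {g : Equiv.Perm (List X)} (hg : g ∈ treeAut X) (x₀ : X) :
    ∃ n, 1 ≤ n ∧ (g ^ n) [x₀] = [x₀] := by
  have hifun : ∀ i : ℕ, ∃ y : X, (g ^ i) [x₀] = [y] :=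
    fun i => treeAut_singleton (pow_mem hg i) x₀
  choose u hu using hifun
  obtain ⟨i, j, hne, heq⟩ := Finite.exists_ne_map_eq_of_infinite u
  rcases hne.lt_or_gt with hlt | hlt
  · refine ⟨j - i, by omega, ?_⟩
    have h1 : (g ^ i) ((g ^ (j - i)) [x₀]) = (g ^ i) [x₀] := by
      rw [← Equiv.Perm.mul_apply, ← pow_add, show i + (j - i) = j by omega, hu j, hu i, heq]
    exact (g ^ i).injective h1
  · refine ⟨i - j, by omega, ?_⟩
    have h1 : (g ^ j) ((g ^ (i - j)) [x₀]) = (g ^ j) [x₀] := by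
      rw [← Equiv.Perm.mul_apply, ← pow_add, show j + (i - j) = i by omega, hu j, hu i, heq]
    exact (g ^ j).injective h1

theorem sec_pow_orbit {g : Equiv.Perm (List X)} (hg : g ∈ treeAut X) {x₀ : X}
    (hsec : ∀ x : X, secAt g [x] = 1 ∨ secAt g [x] = g)
    (huniq : ∀ x : X, secAt g [x] = g → x = x₀)
    {n : ℕ} (hmin : ∀ m, 1 ≤ m → m < n → (g ^ m) [x₀] ≠ [x₀]) :
    ∀ i, i ≤ n - 1 → secAt (g ^ i) (g [x₀]) = 1 := by
  intro i
  induction i with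
  | zero => intro _; rw [pow_zero, secAt_one]
  | succ i ih =>
    intro hle
    have hi : i ≤ n - 1 := Nat.le_of_succ_le hle
    have hlt : i + 1 < n := by omega
    rw [pow_succ', secAt_mul hg (pow_mem hg i), ih hi, mul_one]
    have hvert : (g ^ i) (g [x₀]) = (g ^ (i + 1)) [x₀] := by
      rw [pow_succ g i, Equiv.Perm.mul_apply]
    rw [hvert]
    obtain ⟨x', hx'⟩ := treeAut_singleton (pow_mem hg (i + 1)) x₀
    rw [hx']
    rcases hsec x' with h | h
    · exact h
    · exfalso
      apply hmin (i + 1) (by omega) hlt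
      rw [hx', huniq x' h]

theorem sec_pow_active {g : Equiv.Perm (List X)} (hg : g ∈ treeAut X) {x₀ : X}
    (hsec : ∀ x : X, secAt g [x] = 1 ∨ secAt g [x] = g)
    (hx₀g : secAt g [x₀] = g)
    (huniq : ∀ x : X, secAt g [x] = g → x = x₀)
    {n : ℕ} (hn1 : 1 ≤ n) (hmin : ∀ m, 1 ≤ m → m < n → (g ^ m) [x₀] ≠ [x₀]) :
    secAt (g ^ n) [x₀] = g := by
  have h1 : g ^ n = g ^ (n - 1) * g := by
    rw [← pow_succ]
    congr 1
    omega
  rw [h1, secAt_mul (pow_mem hg (n - 1)) hg, hx₀g,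
    sec_pow_orbit hg hsec huniq hmin (n - 1) le_rfl, one_mul]

/-- The relation `x ~ y`: some element of `G` maps `[x]` to `[y]` with trivial section. -/
def Rel (G : Subgroup (Equiv.Perm (List X))) (x y : X) : Prop :=
  ∃ k, k ∈ G ∧ k [x] = [y] ∧ secAt k [x] = 1

theorem rel_refl (G : Subgroup (Equiv.Perm (List X))) (x : X) : Rel G x x :=
  ⟨1, one_mem G, by simp, secAt_one _⟩

theorem rel_symm {G : Subgroup (Equiv.Perm (List X))} (hGle : G ≤ treeAut X) {x y : X}
    (h : Rel G x y) : Rel G y x := by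
  obtain ⟨k, hkG, hk1, hk2⟩ := h
  refine ⟨k⁻¹, inv_mem hkG, ?_, ?_⟩
  · rw [← hk1, Equiv.Perm.inv_apply_self]
  · rw [secAt_inv (hGle hkG), ← hk1, Equiv.Perm.inv_apply_self, hk2, inv_one]

theorem rel_trans {G : Subgroup (Equiv.Perm (List X))} (hGle : G ≤ treeAut X) {x y z : X}
    (h1 : Rel G x y) (h2 : Rel G y z) : Rel G x z := by
  obtain ⟨k, hkG, hk1, hk2⟩ := h1
  obtain ⟨l, hlG, hl1, hl2⟩ := h2
  refine ⟨l * k, mul_mem hlG hkG, ?_, ?_⟩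
  · rw [Equiv.Perm.mul_apply, hk1, hl1]
  · rw [secAt_mul (hGle hlG) (hGle hkG), hk1, hl2, hk2, one_mul]

theorem gen2_main [Finite X] {G : Subgroup (Equiv.Perm (List X))}
    {Y : Set (Equiv.Perm (List X))} (hGB : GenBasilica G Y) {g : Equiv.Perm (List X)}
    (hgY : g ∈ Y) {x₀ : X} (hsec : ∀ x : X, secAt g [x] = 1 ∨ secAt g [x] = g)
    (hx₀ : secAt g [x₀] = g) (huniq : ∀ x : X, secAt g [x] = g → x = x₀) :
    (∀ y : X, g [x₀] = [y] → Rel G y x₀) ∧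
      ∃ kk, kk ∈ G ∧ kk [x₀] = [x₀] ∧ secAt kk [x₀] = g := by
  classical
  have hgG : g ∈ G := hGB.2.2.1 ▸ Subgroup.subset_closure hgY
  have hgT : g ∈ treeAut X := hGB.1 hgG
  have hP : ∃ n, 1 ≤ n ∧ (g ^ n) [x₀] = [x₀] := exists_pow_fix hgT x₀
  obtain ⟨hn1, hnfix⟩ := Nat.find_spec hP
  set n := Nat.find hP with hn
  have hmin : ∀ m, 1 ≤ m → m < n → (g ^ m) [x₀] ≠ [x₀] := by
    intro m h1 h2 hfix
    exact Nat.find_min hP h2 ⟨h1, hfix⟩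
  constructor
  · intro y hy
    refine ⟨g ^ (n - 1), pow_mem hgG (n - 1), ?_, ?_⟩
    · rw [← hy, ← Equiv.Perm.mul_apply, ← pow_succ, show n - 1 + 1 = n by omega, hnfix]
    · rw [← hy]
      exact sec_pow_orbit hgT hsec huniq hmin (n - 1) le_rfl
  · exact ⟨g ^ n, pow_mem hgG n, hnfix, sec_pow_active hgT hsec hx₀ huniq hn1 hmin⟩

theorem step_rel [Finite X] {G : Subgroup (Equiv.Perm (List X))}
    {Y : Set (Equiv.Perm (List X))} (hGB : GenBasilica G Y) {g : Equiv.Perm (List X)}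
    (hgY : g ∈ Y) (x y : X) (hxy : g [x] = [y]) : Rel G x y := by
  have hgG : g ∈ G := hGB.2.2.1 ▸ Subgroup.subset_closure hgY
  rcases hGB.2.2.2 g hgY with h1 | ⟨hsec, hex⟩
  · exact ⟨g, hgG, hxy, h1 x⟩
  · obtain ⟨x₀, hx₀, huniq⟩ := hex
    by_cases hx : secAt g [x] = 1
    · exact ⟨g, hgG, hxy, hx⟩
    · have hxg : secAt g [x] = g := (hsec x).resolve_left hx
      obtain rfl : x = x₀ := huniq x hxg
      exact rel_symm hGB.1 ((gen2_main hGB hgY hsec hxg huniq).1 y hxy)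

theorem all_rel_aux [Finite X] {G : Subgroup (Equiv.Perm (List X))}
    {Y : Set (Equiv.Perm (List X))} (hGB : GenBasilica G Y) {k : Equiv.Perm (List X)}
    (hkG : k ∈ G) : ∀ x y : X, k [x] = [y] → Rel G x y := by
  rw [← hGB.2.2.1] at hkG
  refine Subgroup.closure_induction
    (p := fun k _ => ∀ x y : X, k [x] = [y] → Rel G x y) ?_ ?_ ?_ ?_ hkG
  · intro g hgY x y hxy
    exact step_rel hGB hgY x y hxy
  · intro x y hxy
    obtain rfl : x = y := List.singleton_inj.mp (by simpa using hxy)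
    exact rel_refl G x
  · intro a b ha hb pa pb x y hxy
    have hbT : b ∈ treeAut X := hGB.1 (hGB.2.2.1 ▸ hb)
    obtain ⟨z, hz⟩ := treeAut_singleton hbT x
    have hay : a [z] = [y] := by rw [← hz, ← Equiv.Perm.mul_apply, hxy]
    exact rel_trans hGB.1 (pb x z hz) (pa z y hay)
  · intro a ha pa x y hxy
    have hax : a [y] = [x] := by rw [← hxy, Equiv.Perm.apply_inv_self]
    exact rel_symm hGB.1 (pa y x hax)

theorem all_rel [Finite X] {G : Subgroup (Equiv.Perm (List X))}
    {Y : Set (Equiv.Perm (List X))} (hGB : GenBasilica G Y)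
    (htrans : ∀ x y : X, ∃ g ∈ G, g [x] = [y]) (x y : X) : Rel G x y := by
  obtain ⟨k, hkG, hk⟩ := htrans x y
  exact all_rel_aux hGB hkG x y hk

theorem dirsec [Finite X] {G : Subgroup (Equiv.Perm (List X))}
    {Y : Set (Equiv.Perm (List X))} (hGB : GenBasilica G Y)
    (htrans : ∀ x y : X, ∃ g ∈ G, g [x] = [y]) {g : Equiv.Perm (List X)}
    (hgY : g ∈ Y) (hgdir : IsDirectedAut g) (x : X) : g ∈ secImage G [x] := by
  have hgG : g ∈ G := hGB.2.2.1 ▸ Subgroup.subset_closure hgY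
  have hgT := hGB.1 hgG
  rcases hGB.2.2.2 g hgY with h1 | ⟨hsec, hex⟩
  · have hg1 : g = 1 := by
      obtain ⟨k, hk1, w, hwlen, hwsec, -⟩ := hgdir
      cases w with
      | nil => simp only [List.length_nil] at hwlen; omega
      | cons a w' =>
        rw [secAt_cons hgT, h1 a, secAt_one] at hwsec
        exact hwsec.symm
    exact ⟨1, one_mem G, by simp, by rw [secAt_one, hg1]⟩
  · obtain ⟨x₀, hx₀, huniq⟩ := hex
    obtain ⟨-, kk, hkkG, hkkfix, hkksec⟩ := gen2_main hGB hgY hsec hx₀ huniq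
    obtain ⟨k₁, hk₁G, hk₁ap, hk₁sec⟩ := all_rel hGB htrans x x₀
    obtain ⟨k₂, hk₂G, hk₂ap, hk₂sec⟩ := all_rel hGB htrans x₀ x
    have hT2 := hGB.1 hk₂G
    have hTk := hGB.1 hkkG
    have hT1 := hGB.1 hk₁G
    have hTkk1 : kk * k₁ ∈ treeAut X := mul_mem hTk hT1
    have hap : (kk * k₁) [x] = [x₀] := by rw [Equiv.Perm.mul_apply, hk₁ap, hkkfix]
    refine ⟨k₂ * (kk * k₁), mul_mem hk₂G (mul_mem hkkG hk₁G), ?_, ?_⟩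
    · rw [Equiv.Perm.mul_apply, hap, hk₂ap]
    · rw [secAt_mul hT2 hTkk1, hap, hk₂sec, one_mul, secAt_mul hTk hT1, hk₁ap, hkksec,
        hk₁sec, mul_one]

end GBaux


/-- **Characterization of self-replication for generalized basilica groups**: a
generalized basilica group `G = ⟨Y⟩` is self-replicating if and only if `G` is generated
by the directed elements of `Y` and `G` acts transitively on `X`. -/
theorem genBasilica_selfReplicating_iff
    {X : Type u} [Finite X] [Nontrivial X]
    (G : Subgroup (Equiv.Perm (List X))) (Y : Set (Equiv.Perm (List X)))
    (hGB : GenBasilica G Y) :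
    SelfReplicating G ↔
      (Subgroup.closure {g ∈ Y | IsDirectedAut g} = G ∧
        ∀ x y : X, ∃ g ∈ G, g [x] = [y]) := by
  constructor
  · intro hSR
    refine ⟨?_, hSR.2.1⟩
    have hDle : Subgroup.closure {g ∈ Y | IsDirectedAut g} ≤ G := by
      rw [← hGB.2.2.1]
      exact Subgroup.closure_mono (Set.sep_subset _ _)
    have hsecD : ∀ k, k ∈ G → ∀ x : X,
        secAt k [x] ∈ Subgroup.closure {g ∈ Y | IsDirectedAut g} := by
      intro k hk
      rw [← hGB.2.2.1] at hk
      refine Subgroup.closure_induction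
        (p := fun k _ => ∀ x : X, secAt k [x] ∈ Subgroup.closure {g ∈ Y | IsDirectedAut g})
        ?_ ?_ ?_ ?_ hk
      · intro g hgY x
        rcases hGB.2.2.2 g hgY with h | h
        · rw [h x]; exact one_mem _
        · rcases h.1 x with h1 | h1
          · rw [h1]; exact one_mem _
          · rw [h1]
            refine Subgroup.subset_closure ⟨hgY, ?_⟩
            obtain ⟨x₀, hx₀, huniq⟩ := h.2
            refine ⟨1, le_rfl, [x₀], rfl, hx₀, ?_⟩
            intro v hv hne
            obtain ⟨x', rfl⟩ := List.length_eq_one_iff.mp hv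
            rcases h.1 x' with h2 | h2
            · rw [h2]
              exact ⟨0, fun v' _ => GBaux.secAt_one v'⟩
            · exact absurd (by rw [huniq x' h2]) hne
      · intro x
        rw [GBaux.secAt_one]
        exact one_mem _
      · intro a b ha hb pa pb x
        have haT : a ∈ treeAut X := hGB.1 (hGB.2.2.1 ▸ ha)
        have hbT : b ∈ treeAut X := hGB.1 (hGB.2.2.1 ▸ hb)
        rw [GBaux.secAt_mul haT hbT]
        obtain ⟨y, hy⟩ := GBaux.treeAut_singleton hbT x
        rw [hy]
        exact mul_mem (pa y) (pb x)
      · intro a ha pa x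
        have haT : a ∈ treeAut X := hGB.1 (hGB.2.2.1 ▸ ha)
        rw [GBaux.secAt_inv haT]
        obtain ⟨y, hy⟩ := GBaux.treeAut_singleton ((treeAut X).inv_mem haT) x
        rw [hy]
        exact inv_mem (pa y)
    refine le_antisymm hDle ?_
    intro h hhG
    obtain ⟨x⟩ : Nonempty X := inferInstance
    have hmem : h ∈ secImage G [x] := by rw [hSR.2.2 x]; exact hhG
    obtain ⟨k, hkG, -, rfl⟩ := hmem
    exact hsecD k hkG x
  · rintro ⟨hD, htrans⟩
    have hSS : SelfSimilarSub G := GBaux.selfSimilar_of_genBasilica hGB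
    refine ⟨hSS, htrans, ?_⟩
    intro x
    apply Set.eq_of_subset_of_subset
    · rintro h ⟨k, hkG, -, rfl⟩
      exact hSS k hkG [x]
    · intro h hhG
      have hh' : h ∈ Subgroup.closure {g ∈ Y | IsDirectedAut g} := by rw [hD]; exact hhG
      refine Subgroup.closure_induction (p := fun h _ => h ∈ secImage G [x]) ?_ ?_ ?_ ?_ hh'
      · rintro g ⟨hgY, hgdir⟩
        exact GBaux.dirsec hGB htrans hgY hgdir x
      · exact ⟨1, one_mem G, by simp, GBaux.secAt_one _⟩
      · rintro a b ha hb ⟨ka, hkaG, hkafix, hkasec⟩ ⟨kb, hkbG, hkbfix, hkbsec⟩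
        refine ⟨ka * kb, mul_mem hkaG hkbG,
          by rw [Equiv.Perm.mul_apply, hkbfix, hkafix], ?_⟩
        rw [GBaux.secAt_mul (hGB.1 hkaG) (hGB.1 hkbG), hkbfix, hkasec, hkbsec]
      · rintro a ha ⟨ka, hkaG, hkafix, hkasec⟩
        have hfix : ka⁻¹ [x] = [x] := by
          conv_lhs => rw [← hkafix]
          rw [Equiv.Perm.inv_apply_self]
        refine ⟨ka⁻¹, inv_mem hkaG, hfix, ?_⟩
        rw [GBaux.secAt_inv (hGB.1 hkaG), hfix, hkasec]
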